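/- Let H be a cocommutative bialgebra over a commutative ring R, F a Drinfel'd twist on H with R-matrix ℛ := F₂₁ · F⁻¹ and ℛ⁻¹ = τ(ℛ) = Σ_k R_k ⊗ R^k, and let L be a Lie algebra in H-modules with twisted bracket [x, y]_⋆ := Σ_k ⁅f̄^k(x), f̄_k(y)⁆. Then the twisted bracket satisfies the braided Jacobi identity: for all x, y, z ∈ L, [x, [y, z]_⋆]_⋆ = [[x, y]_⋆, z]_⋆ + Σ_k [R_k(y), [R^k(x), z]_⋆]_⋆. In particular, the twist of a Lie algebra in H-modules is a braided Lie algebra. -/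

import Mathlib

open scoped TensorProduct

noncomputable section

/-- `Δ ⊗ id` as an algebra homomorphism `H ⊗ H → (H ⊗ H) ⊗ H`. -/
def comulTensorId (R H : Type*) [CommRing R] [Ring H] [Bialgebra R H] :
    (H ⊗[R] H) →ₐ[R] (H ⊗[R] H) ⊗[R] H :=
  Algebra.TensorProduct.map (Bialgebra.comulAlgHom R H) (AlgHom.id R H)

/-- `id ⊗ Δ` as an algebra homomorphism `H ⊗ H → H ⊗ (H ⊗ H)`. -/
def idTensorComul (R H : Type*) [CommRing R] [Ring H] [Bialgebra R H] :
    (H ⊗[R] H) →ₐ[R] H ⊗[R] (H ⊗[R] H) :=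
  Algebra.TensorProduct.map (AlgHom.id R H) (Bialgebra.comulAlgHom R H)

/-- `F` is a Drinfel'd twist on the bialgebra `H` with two-sided inverse `Finv`:
it is invertible and satisfies the 2-cocycle condition
`(F ⊗ 1) · (Δ ⊗ id)(F) = (1 ⊗ F) · (id ⊗ Δ)(F)` in `H ⊗ H ⊗ H`. -/
def IsDrinfeldTwist (R : Type*) {H : Type*} [CommRing R] [Ring H] [Bialgebra R H]
    (F Finv : H ⊗[R] H) : Prop :=
  F * Finv = 1 ∧ Finv * F = 1 ∧
    (TensorProduct.assoc R H H H) ((F ⊗ₜ[R] (1 : H)) * comulTensorId R H F) =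
      ((1 : H) ⊗ₜ[R] F) * idTensorComul R H F

/-- The `R`-matrix `ℛ := F₂₁ · F⁻¹` associated to a Drinfel'd twist, where
`F₂₁ = τ(F)` and `τ` is the flip of `H ⊗ H`. -/
def Rmat (R : Type*) {H : Type*} [CommRing R] [Ring H] [Bialgebra R H]
    (F Finv : H ⊗[R] H) : H ⊗[R] H :=
  (Algebra.TensorProduct.comm R H H) F * Finv

/-- The bialgebra `H` is cocommutative: `τ ∘ Δ = Δ`. -/
def IsCocommutative (R : Type*) (H : Type*) [CommRing R] [Ring H] [Bialgebra R H] : Prop :=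
  ∀ x : H, (Algebra.TensorProduct.comm R H H) (Coalgebra.comul (R := R) x) =
    Coalgebra.comul (R := R) x

/-- The action of an element of `H ⊗ H` on `M ⊗ N`, acting with the first leg on `M`
and the second leg on `N` through the given representations. -/
def legAct {R H : Type*} [CommRing R] [Ring H] [Algebra R H]
    {M N : Type*} [AddCommGroup M] [Module R M] [AddCommGroup N] [Module R N]
    (ρM : H →ₐ[R] Module.End R M) (ρN : H →ₐ[R] Module.End R N) :
    H ⊗[R] H →ₗ[R] (M ⊗[R] N →ₗ[R] M ⊗[R] N) :=
  (TensorProduct.homTensorHomMap (RingHom.id R) M N M N).comp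
    (TensorProduct.map ρM.toLinearMap ρN.toLinearMap)

/-- The Lie bracket of `L` as an `R`-bilinear map. -/
def lieBil (R L : Type*) [CommRing R] [LieRing L] [LieAlgebra R L] :
    L →ₗ[R] L →ₗ[R] L :=
  LinearMap.mk₂ R (fun x y => ⁅x, y⁆) add_lie smul_lie lie_add lie_smul

/-- `ρ` makes the `R`-Lie algebra `L` into a Lie algebra in `H`-modules:
`ρ(h)⁅x, y⁆ = Σ ⁅ρ(h₍₁₎)(x), ρ(h₍₂₎)(y)⁆`. -/
def IsHLieAlgebra (R : Type*) {H L : Type*} [CommRing R] [Ring H] [Bialgebra R H]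
    [LieRing L] [LieAlgebra R L] (ρ : H →ₐ[R] Module.End R L) : Prop :=
  ∀ (h : H) (x y : L),
    ρ h ⁅x, y⁆ =
      TensorProduct.lift (lieBil R L)
        (legAct ρ ρ (Coalgebra.comul (R := R) h) (x ⊗ₜ[R] y))

/-- The twisted bracket `[x, y]_⋆ := Σ ⁅f̄ᵏ(x), f̄ₖ(y)⁆`, as a linear map on `L ⊗ L`. -/
def starBracket {R H L : Type*} [CommRing R] [Ring H] [Bialgebra R H]
    [LieRing L] [LieAlgebra R L] (ρ : H →ₐ[R] Module.End R L) (Finv : H ⊗[R] H) :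
    L ⊗[R] L →ₗ[R] L :=
  (TensorProduct.lift (lieBil R L)).comp (legAct ρ ρ Finv)

namespace BJA

variable {R : Type*} [CommRing R]

/-- Tensor product of two representations, as an algebra hom. -/
def tpEnd {A B M N : Type*} [Ring A] [Ring B] [Algebra R A] [Algebra R B]
    [AddCommGroup M] [Module R M] [AddCommGroup N] [Module R N]
    (ρM : A →ₐ[R] Module.End R M) (ρN : B →ₐ[R] Module.End R N) :
    A ⊗[R] B →ₐ[R] Module.End R (M ⊗[R] N) :=
  (Module.endTensorEndAlgHom (R := R) (S := R) (A := R)).comp (Algebra.TensorProduct.map ρM ρN)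

@[simp] lemma tpEnd_tmul {A B M N : Type*} [Ring A] [Ring B] [Algebra R A] [Algebra R B]
    [AddCommGroup M] [Module R M] [AddCommGroup N] [Module R N]
    (ρM : A →ₐ[R] Module.End R M) (ρN : B →ₐ[R] Module.End R N)
    (a : A) (b : B) (m : M) (n : N) :
    tpEnd ρM ρN (a ⊗ₜ[R] b) (m ⊗ₜ[R] n) = ρM a m ⊗ₜ[R] ρN b n := rfl

variable {H L : Type*} [Ring H] [Bialgebra R H] [LieRing L] [LieAlgebra R L]
variable (ρ : H →ₐ[R] Module.End R L)

abbrev act2 : H ⊗[R] H →ₐ[R] Module.End R (L ⊗[R] L) := tpEnd ρ ρ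
abbrev act3L : (H ⊗[R] H) ⊗[R] H →ₐ[R] Module.End R ((L ⊗[R] L) ⊗[R] L) := tpEnd (act2 ρ) ρ
abbrev act3R : H ⊗[R] (H ⊗[R] H) →ₐ[R] Module.End R (L ⊗[R] (L ⊗[R] L)) := tpEnd ρ (act2 ρ)

def br : L ⊗[R] L →ₗ[R] L := TensorProduct.lift (lieBil R L)

@[simp] lemma br_tmul (x y : L) : br (x ⊗ₜ[R] y) = ⁅x, y⁆ := rfl

def TT : L ⊗[R] (L ⊗[R] L) →ₗ[R] L := br ∘ₗ TensorProduct.map LinearMap.id br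
def SS : (L ⊗[R] L) ⊗[R] L →ₗ[R] L := br ∘ₗ TensorProduct.map br LinearMap.id

@[simp] lemma TT_tmul (x y z : L) : TT (x ⊗ₜ[R] (y ⊗ₜ[R] z)) = ⁅x, ⁅y, z⁆⁆ := rfl
@[simp] lemma SS_tmul (x y z : L) : SS ((x ⊗ₜ[R] y) ⊗ₜ[R] z) = ⁅⁅x, y⁆, z⁆ := rfl

lemma legAct_eq (G : H ⊗[R] H) : legAct ρ ρ G = (act2 ρ G : Module.End R (L ⊗[R] L)) := by
  induction G using TensorProduct.induction_on with
  | zero => simp [legAct]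
  | tmul g h =>
    apply TensorProduct.ext'
    intro m n
    rfl
  | add a b ha hb => simp [map_add, ha, hb]

lemma star_eq (Finv : H ⊗[R] H) (v : L ⊗[R] L) :
    starBracket ρ Finv v = br (act2 ρ Finv v) := by
  rw [starBracket, LinearMap.comp_apply, legAct_eq]; rfl

variable {ρ} in
lemma hL' (hL : IsHLieAlgebra R ρ) (h : H) (t : L ⊗[R] L) :
    ρ h (br t) = br (act2 ρ (Coalgebra.comul (R := R) h) t) := by
  induction t using TensorProduct.induction_on with
  | zero => simp
  | tmul x y =>
    have := hL h x y
    rw [legAct_eq] at this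
    exact this
  | add a b ha hb => simp [map_add, ha, hb]

variable {ρ} in
lemma M2 (hL : IsHLieAlgebra R ρ) (G : H ⊗[R] H) (u : L) (t : L ⊗[R] L) :
    act2 ρ G (u ⊗ₜ[R] br t) =
      TensorProduct.map LinearMap.id br (act3R ρ (idTensorComul R H G) (u ⊗ₜ[R] t)) := by
  induction G using TensorProduct.induction_on with
  | zero => simp
  | tmul g h =>
    have hi : idTensorComul R H (g ⊗ₜ[R] h) = g ⊗ₜ[R] (Coalgebra.comul (R := R) h) := by
      simp [idTensorComul]
    rw [hi, tpEnd_tmul, tpEnd_tmul, hL' hL, TensorProduct.map_tmul]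
    rfl
  | add a b ha hb => simp [map_add, LinearMap.add_apply, ha, hb]

variable {ρ} in
lemma M1 (hL : IsHLieAlgebra R ρ) (G : H ⊗[R] H) (u : L) (t : L ⊗[R] L) :
    act2 ρ G (br t ⊗ₜ[R] u) =
      TensorProduct.map br LinearMap.id (act3L ρ (comulTensorId R H G) (t ⊗ₜ[R] u)) := by
  induction G using TensorProduct.induction_on with
  | zero => simp
  | tmul g h =>
    have hi : comulTensorId R H (g ⊗ₜ[R] h) = (Coalgebra.comul (R := R) g) ⊗ₜ[R] h := by
      simp [comulTensorId]
    rw [hi, tpEnd_tmul, tpEnd_tmul, hL' hL, TensorProduct.map_tmul]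
    rfl
  | add a b ha hb => simp [map_add, LinearMap.add_apply, ha, hb]

lemma shiftR (G : H ⊗[R] H) (u : L) (t : L ⊗[R] L) :
    act3R ρ ((1 : H) ⊗ₜ[R] G) (u ⊗ₜ[R] t) = u ⊗ₜ[R] act2 ρ G t := by
  rw [tpEnd_tmul, map_one]; rfl

lemma shiftL (G : H ⊗[R] H) (u : L) (t : L ⊗[R] L) :
    act3L ρ (G ⊗ₜ[R] (1 : H)) (t ⊗ₜ[R] u) = act2 ρ G t ⊗ₜ[R] u := by
  rw [tpEnd_tmul, map_one]; rfl

lemma assoc_compat (E : (H ⊗[R] H) ⊗[R] H) (w : (L ⊗[R] L) ⊗[R] L) :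
    act3R ρ (Algebra.TensorProduct.assoc R R R H H H E) (TensorProduct.assoc R L L L w) =
      TensorProduct.assoc R L L L (act3L ρ E w) := by
  induction E using TensorProduct.induction_on with
  | zero => simp
  | add a b ha hb => simp [map_add, LinearMap.add_apply, ha, hb]
  | tmul p k =>
    induction p using TensorProduct.induction_on with
    | zero => simp [TensorProduct.zero_tmul]
    | add a b ha hb => simp [TensorProduct.add_tmul, map_add, LinearMap.add_apply, ha, hb]
    | tmul g h =>
      induction w using TensorProduct.induction_on with
      | zero => simp
      | add a b ha hb =>
        simp only [Algebra.TensorProduct.assoc_tmul] at ha hb ⊢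
        simp [map_add, ha, hb]
      | tmul t c =>
        induction t using TensorProduct.induction_on with
        | zero => simp [TensorProduct.zero_tmul]
        | add a b ha hb =>
          simp only [Algebra.TensorProduct.assoc_tmul] at ha hb ⊢
          simp only [TensorProduct.add_tmul, map_add, LinearMap.map_add]
          rw [ha, hb]
        | tmul a b =>
          simp [Algebra.TensorProduct.assoc_tmul, TensorProduct.assoc_tmul]

def sigmaMap : H ⊗[R] (H ⊗[R] H) →ₗ[R] H ⊗[R] (H ⊗[R] H) :=
  (TensorProduct.assoc R H H H).toLinearMap ∘ₗ
    (TensorProduct.map (TensorProduct.comm R H H).toLinearMap LinearMap.id) ∘ₗ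
      (TensorProduct.assoc R H H H).symm.toLinearMap

@[simp] lemma sigmaMap_tmul (g h k : H) :
    sigmaMap (g ⊗ₜ[R] (h ⊗ₜ[R] k)) = h ⊗ₜ[R] (g ⊗ₜ[R] k) := by
  simp [sigmaMap]

lemma jacobi_lemma (E : H ⊗[R] (H ⊗[R] H)) (x y z : L) :
    TT (act3R ρ E (x ⊗ₜ[R] (y ⊗ₜ[R] z))) =
      SS (act3L ρ ((Algebra.TensorProduct.assoc R R R H H H).symm E) ((x ⊗ₜ[R] y) ⊗ₜ[R] z)) +
        TT (act3R ρ (sigmaMap E) (y ⊗ₜ[R] (x ⊗ₜ[R] z))) := by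
  induction E using TensorProduct.induction_on with
  | zero => simp
  | add a b ha hb => simp only [map_add, LinearMap.add_apply] at *; rw [ha, hb]; abel
  | tmul g q =>
    induction q using TensorProduct.induction_on with
    | zero => simp [TensorProduct.tmul_zero]
    | add a b ha hb =>
      simp only [TensorProduct.tmul_add, map_add, LinearMap.add_apply] at *
      rw [ha, hb]; abel
    | tmul h k =>
      rw [sigmaMap_tmul, Algebra.TensorProduct.assoc_symm_tmul]
      rw [tpEnd_tmul, tpEnd_tmul, tpEnd_tmul, tpEnd_tmul, tpEnd_tmul]
      simp only [TT_tmul, SS_tmul]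
      exact leibniz_lie _ _ _

end BJA

namespace BJA

variable (R : Type*) {H : Type*} [CommRing R] [Ring H] [Bialgebra R H]

def Xel (Finv : H ⊗[R] H) : H ⊗[R] (H ⊗[R] H) :=
  idTensorComul R H Finv * ((1 : H) ⊗ₜ[R] Finv)

def Yel (Finv : H ⊗[R] H) : (H ⊗[R] H) ⊗[R] H :=
  comulTensorId R H Finv * (Finv ⊗ₜ[R] (1 : H))

lemma cocycle_Y (F Finv : H ⊗[R] H) (hF : IsDrinfeldTwist R F Finv) :
    Algebra.TensorProduct.assoc R R R H H H (Yel R Finv) = Xel R Finv := by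
  obtain ⟨h1, h2, h3⟩ := hF
  have h3' : Algebra.TensorProduct.assoc R R R H H H ((F ⊗ₜ[R] (1 : H)) * comulTensorId R H F) =
      ((1 : H) ⊗ₜ[R] F) * idTensorComul R H F := h3
  have hYP : Yel R Finv * ((F ⊗ₜ[R] (1 : H)) * comulTensorId R H F) = 1 := by
    rw [Yel, mul_assoc, ← mul_assoc (Finv ⊗ₜ[R] (1 : H)),
      Algebra.TensorProduct.tmul_mul_tmul, h2, mul_one, ← Algebra.TensorProduct.one_def,
      one_mul, ← map_mul, h2, map_one]
  have hQX : (((1 : H) ⊗ₜ[R] F) * idTensorComul R H F) * Xel R Finv = 1 := by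
    rw [Xel, mul_assoc, ← mul_assoc (idTensorComul R H F), ← map_mul, h1, map_one, one_mul,
      Algebra.TensorProduct.tmul_mul_tmul, h1, mul_one, ← Algebra.TensorProduct.one_def]
  have e : Algebra.TensorProduct.assoc R R R H H H (Yel R Finv) *
      ((((1 : H) ⊗ₜ[R] F) * idTensorComul R H F) * Xel R Finv) = Xel R Finv := by
    rw [← mul_assoc, ← h3', ← map_mul, hYP, map_one, one_mul]
  rw [← e, hQX, mul_one]

def tau12 : (H ⊗[R] H) ⊗[R] H →ₐ[R] (H ⊗[R] H) ⊗[R] H :=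
  Algebra.TensorProduct.map (Algebra.TensorProduct.comm R H H).toAlgHom (AlgHom.id R H)

lemma tau12_comulTensorId (hcc : IsCocommutative R H) (t : H ⊗[R] H) :
    tau12 R (comulTensorId R H t) = comulTensorId R H t := by
  induction t using TensorProduct.induction_on with
  | zero => simp
  | tmul g h => simp [tau12, comulTensorId, hcc g]
  | add a b ha hb => simp only [map_add, ha, hb]

lemma comm_comm (t : H ⊗[R] H) :
    Algebra.TensorProduct.comm R H H (Algebra.TensorProduct.comm R H H t) = t := by
  induction t using TensorProduct.induction_on with
  | zero => simp
  | tmul g h => simp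
  | add a b ha hb => simp only [map_add, ha, hb]

lemma sigma_assoc (E : (H ⊗[R] H) ⊗[R] H) :
    sigmaMap (Algebra.TensorProduct.assoc R R R H H H E) =
      Algebra.TensorProduct.assoc R R R H H H (tau12 R E) := by
  induction E using TensorProduct.induction_on with
  | zero => simp
  | add a b ha hb => simp only [map_add, ha, hb]
  | tmul p k =>
    induction p using TensorProduct.induction_on with
    | zero => simp [TensorProduct.zero_tmul]
    | add a b ha hb => simp only [TensorProduct.add_tmul, map_add, ha, hb]
    | tmul g h =>
      simp [tau12, Algebra.TensorProduct.assoc_tmul]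

lemma sigma_X (F Finv : H ⊗[R] H) (hcc : IsCocommutative R H)
    (hF : IsDrinfeldTwist R F Finv) :
    sigmaMap (Xel R Finv) = Xel R Finv *
      Algebra.TensorProduct.assoc R R R H H H
        ((Algebra.TensorProduct.comm R H H (Rmat R F Finv)) ⊗ₜ[R] (1 : H)) := by
  have hc : Algebra.TensorProduct.comm R H H (Rmat R F Finv) =
      F * Algebra.TensorProduct.comm R H H Finv := by
    rw [Rmat, map_mul, comm_comm]
  have hX := cocycle_Y R F Finv hF
  rw [← hX, sigma_assoc, ← map_mul]
  congr 1
  rw [Yel, map_mul, tau12_comulTensorId R hcc]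
  have ht : tau12 R (Finv ⊗ₜ[R] (1 : H)) =
      (Algebra.TensorProduct.comm R H H Finv) ⊗ₜ[R] (1 : H) := by
    simp [tau12]
  rw [ht, hc, mul_assoc, Algebra.TensorProduct.tmul_mul_tmul, mul_one,
    ← mul_assoc Finv F, hF.2.1, one_mul]

end BJA

namespace BJA

variable {R H L : Type*} [CommRing R] [Ring H] [Bialgebra R H]
  [LieRing L] [LieAlgebra R L] (ρ : H →ₐ[R] Module.End R L)

lemma psi_pt (hL : IsHLieAlgebra R ρ) (Finv : H ⊗[R] H) (u : L) (w : L ⊗[R] L) :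
    starBracket ρ Finv (u ⊗ₜ[R] starBracket ρ Finv w) =
      TT (act3R ρ (Xel R Finv) (u ⊗ₜ[R] w)) := by
  rw [star_eq, star_eq, M2 hL, ← shiftR ρ Finv u w]
  have h : act3R ρ (idTensorComul R H Finv) (act3R ρ ((1 : H) ⊗ₜ[R] Finv) (u ⊗ₜ[R] w)) =
      act3R ρ (Xel R Finv) (u ⊗ₜ[R] w) := by
    rw [Xel, map_mul]; rfl
  rw [h]; rfl

lemma psi_all (hL : IsHLieAlgebra R ρ) (Finv : H ⊗[R] H) (v : L ⊗[R] (L ⊗[R] L)) :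
    starBracket ρ Finv (TensorProduct.map LinearMap.id (starBracket ρ Finv) v) =
      TT (act3R ρ (Xel R Finv) v) := by
  induction v using TensorProduct.induction_on with
  | zero => simp
  | tmul u w =>
    rw [TensorProduct.map_tmul]
    exact psi_pt ρ hL Finv u w
  | add a b ha hb => simp only [map_add, ha, hb]

lemma phi_pt (hL : IsHLieAlgebra R ρ) (Finv : H ⊗[R] H) (t : L ⊗[R] L) (u : L) :
    starBracket ρ Finv (starBracket ρ Finv t ⊗ₜ[R] u) =
      SS (act3L ρ (Yel R Finv) (t ⊗ₜ[R] u)) := by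
  rw [star_eq, star_eq, M1 hL, ← shiftL ρ Finv u t]
  have h : act3L ρ (comulTensorId R H Finv) (act3L ρ (Finv ⊗ₜ[R] (1 : H)) (t ⊗ₜ[R] u)) =
      act3L ρ (Yel R Finv) (t ⊗ₜ[R] u) := by
    rw [Yel, map_mul]; rfl
  rw [h]; rfl

end BJA

/-- For a Drinfel'd twist on a cocommutative bialgebra `H` and a Lie
algebra `L` in `H`-modules, the twisted bracket satisfies the braided Jacobi identity:
`[x, [y, z]_⋆]_⋆ = [[x, y]_⋆, z]_⋆ + Σ_k [R_k(y), [R^k(x), z]_⋆]_⋆`,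
where `ℛ⁻¹ = τ(ℛ) = Σ_k R_k ⊗ R^k`. -/
theorem starBracket_braided_jacobi
    (R : Type*) [CommRing R] (H : Type*) [Ring H] [Bialgebra R H]
    (hcc : IsCocommutative R H)
    (L : Type*) [LieRing L] [LieAlgebra R L]
    (ρ : H →ₐ[R] Module.End R L) (hL : IsHLieAlgebra R ρ)
    (F Finv : H ⊗[R] H) (hF : IsDrinfeldTwist R F Finv) :
    ∀ x y z : L,
      starBracket ρ Finv (x ⊗ₜ[R] (starBracket ρ Finv (y ⊗ₜ[R] z))) =
        starBracket ρ Finv ((starBracket ρ Finv (x ⊗ₜ[R] y)) ⊗ₜ[R] z) +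
          ((starBracket ρ Finv).comp
              (TensorProduct.map LinearMap.id (starBracket ρ Finv)))
            ((TensorProduct.assoc R L L L)
              ((legAct ρ ρ ((Algebra.TensorProduct.comm R H H) (Rmat R F Finv))
                  (y ⊗ₜ[R] x)) ⊗ₜ[R] z)) := by
  intro x y z
  rw [BJA.psi_pt ρ hL Finv x (y ⊗ₜ[R] z),
    BJA.jacobi_lemma ρ (BJA.Xel R Finv) x y z]
  congr 1
  · have hY : (Algebra.TensorProduct.assoc R R R H H H).symm (BJA.Xel R Finv) =
        BJA.Yel R Finv := by
      rw [← BJA.cocycle_Y R F Finv hF, AlgEquiv.symm_apply_apply]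
    rw [hY, ← BJA.phi_pt ρ hL Finv (x ⊗ₜ[R] y) z]
  · rw [BJA.sigma_X R F Finv hcc hF]
    have hsplit : BJA.act3R ρ (BJA.Xel R Finv *
        Algebra.TensorProduct.assoc R R R H H H
          ((Algebra.TensorProduct.comm R H H (Rmat R F Finv)) ⊗ₜ[R] (1 : H)))
        (y ⊗ₜ[R] (x ⊗ₜ[R] z)) =
        BJA.act3R ρ (BJA.Xel R Finv) (BJA.act3R ρ
          (Algebra.TensorProduct.assoc R R R H H H
            ((Algebra.TensorProduct.comm R H H (Rmat R F Finv)) ⊗ₜ[R] (1 : H)))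
          (y ⊗ₜ[R] (x ⊗ₜ[R] z))) := by
      rw [map_mul]; rfl
    rw [hsplit]
    have hac := BJA.assoc_compat ρ
      ((Algebra.TensorProduct.comm R H H (Rmat R F Finv)) ⊗ₜ[R] (1 : H))
      ((y ⊗ₜ[R] x) ⊗ₜ[R] z)
    rw [TensorProduct.assoc_tmul] at hac
    rw [hac, BJA.shiftL, ← BJA.psi_all ρ hL Finv, LinearMap.comp_apply,
      BJA.legAct_eq]
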